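/- Let D and D̄ be star tree metrics on 4 taxa with pendant weights (a,d,c,e) and (ā,d̄,c̄,ē) at leaves 1,2,3,4 respectively, all weights positive. Define s=(ā+c̄)−(a+c), t=(d̄+ē)−(d+e), x=(ā+ē)−(a+e), y=(d̄+c̄)−(d+c). Suppose the mixture T = D⊕D̄ satisfies T(1,3)+T(2,4) = T(1,4)+T(2,3) > T(1,2)+T(3,4), and suppose s ≥ 0. Then s > 0 and t < 0, and moreover either (x = s and y = t) or (x = t and y = s). -/
import Mathlib


/-- With `D`, `D̄` star tree metrics on 4 taxa as above, if the mixture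
`T = D ⊕ D̄` satisfies `T(1,3)+T(2,4) = T(1,4)+T(2,3) > T(1,2)+T(3,4)` and `s ≥ 0`,
then `s > 0`, `t < 0`, and either (`x = s` and `y = t`) or (`x = t` and `y = s`). -/
theorem mixture_quartet_sign_pattern
    (a d c e ab db cb eb : ℝ)
    (ha : 0 < a) (hd : 0 < d) (hc : 0 < c) (he : 0 < e)
    (hab : 0 < ab) (hdb : 0 < db) (hcb : 0 < cb) (heb : 0 < eb)
    (s t x y : ℝ)
    (hs : s = (ab + cb) - (a + c)) (ht : t = (db + eb) - (d + e))
    (hx : x = (ab + eb) - (a + e)) (hy : y = (db + cb) - (d + c))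
    (hEq : max (a + c) (ab + cb) + max (d + e) (db + eb)
        = max (a + e) (ab + eb) + max (d + c) (db + cb))
    (hGt : max (a + d) (ab + db) + max (c + e) (cb + eb)
        < max (a + c) (ab + cb) + max (d + e) (db + eb))
    (hs0 : 0 ≤ s) :
    0 < s ∧ t < 0 ∧ ((x = s ∧ y = t) ∨ (x = t ∧ y = s)) := by
  have key : ∀ p q : ℝ, max p q = p + max 0 (q - p) := by
    intro p q
    rcases le_total p q with h | h
    · rw [max_eq_right h, max_eq_right (by linarith)]; ring
    · rw [max_eq_left h, max_eq_left (by linarith)]; ring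
  set u : ℝ := (ab + db) - (a + d) with hu
  set v : ℝ := (cb + eb) - (c + e) with hv
  rw [key (a+c) (ab+cb), key (d+e) (db+eb), key (a+e) (ab+eb), key (d+c) (db+cb)] at hEq
  rw [key (a+d) (ab+db), key (c+e) (cb+eb), key (a+c) (ab+cb), key (d+e) (db+eb)] at hGt
  rw [← hs, ← ht, ← hx, ← hy] at hEq
  rw [← hs, ← ht, ← hu, ← hv] at hGt
  -- cancel the equal constant parts
  have hEq' : max 0 s + max 0 t = max 0 x + max 0 y := by linarith
  have hGt' : max 0 u + max 0 v < max 0 s + max 0 t := by linarith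
  have huv : u + v = s + t := by rw [hu, hv, hs, ht]; ring
  have hxy : x + y = s + t := by rw [hx, hy, hs, ht]; ring
  have hu0 : u ≤ max 0 u := le_max_right 0 u
  have hv0 : v ≤ max 0 v := le_max_right 0 v
  have hu0' : (0:ℝ) ≤ max 0 u := le_max_left 0 u
  have hv0' : (0:ℝ) ≤ max 0 v := le_max_left 0 v
  have hms : max 0 s = s := max_eq_right hs0
  -- t < 0
  have ht0 : t < 0 := by
    by_contra h
    push_neg at h
    rw [hms, max_eq_right h] at hGt'
    linarith
  have hmt : max 0 t = 0 := max_eq_left (le_of_lt ht0)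
  rw [hms, hmt] at hEq' hGt'
  -- s > 0
  have hspos : 0 < s := by
    rcases lt_or_eq_of_le hs0 with h | h
    · exact h
    · exfalso; rw [← h] at hGt'; linarith
  refine ⟨hspos, ht0, ?_⟩
  -- now s = max 0 x + max 0 y, x + y = s + t, t < 0
  rcases le_total x 0 with hxle | hxge
  · right
    rw [max_eq_left hxle] at hEq'
    have hy0 : max 0 y = s := by linarith
    have hypos : 0 < y := by
      by_contra h
      push_neg at h
      rw [max_eq_left h] at hy0
      linarith
    have hys : y = s := by rw [max_eq_right (le_of_lt hypos)] at hy0; exact hy0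
    exact ⟨by linarith, hys⟩
  · rw [max_eq_right hxge] at hEq'
    rcases le_total y 0 with hyle | hyge
    · left
      rw [max_eq_left hyle] at hEq'
      exact ⟨by linarith, by linarith⟩
    · exfalso
      rw [max_eq_right hyge] at hEq'
      linarith
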